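/- Let $F : \mathbb{R} \to \mathbb{R}$ be a function of bounded variation, and suppose at a point $x_0$ the symmetric derivative $F'_{sym}(x_0) = \lim_{h \to 0^+} \frac{F(x_0+h)-F(x_0-h)}{2h}$ exists. Then the Poisson integral $\mathcal{P}_F(x_0, y) = \frac{y}{\pi}\int_{-\infty}^{\infty} \frac{dF(t)}{(x_0-t)^2 + y^2}$ converges to $F'_{sym}(x_0)$ as $y \to 0^+$. -/

import Mathlib

open MeasureTheory Filter Set Topology

set_option maxHeartbeats 2000000

namespace FatouAux

noncomputable def c (y h : ℝ) : ℝ := 2 * h / (h ^ 2 + y ^ 2) ^ 2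
noncomputable def phi (y h : ℝ) : ℝ := y / Real.pi * c y h * (2 * h)
noncomputable def Phi (y h : ℝ) : ℝ :=
  2 / Real.pi * (Real.arctan (h / y) - h * y / (h ^ 2 + y ^ 2))

lemma hasDerivAt_neg_inv {y : ℝ} (hy : 0 < y) (h : ℝ) :
    HasDerivAt (fun h : ℝ => -((h ^ 2 + y ^ 2)⁻¹)) (c y h) h := by
  have hne : h ^ 2 + y ^ 2 ≠ 0 := by positivity
  have h1 : HasDerivAt (fun h : ℝ => h ^ 2 + y ^ 2) (2 * h) h := by
    simpa using (hasDerivAt_pow 2 h).add_const (y ^ 2)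
  have h2 : HasDerivAt (fun h : ℝ => -((h ^ 2 + y ^ 2)⁻¹)) _ h := (h1.inv hne).neg
  convert h2 using 1
  unfold c
  field_simp

lemma tendsto_neg_inv {y : ℝ} (hy : 0 < y) :
    Tendsto (fun h : ℝ => -((h ^ 2 + y ^ 2)⁻¹)) atTop (𝓝 0) := by
  have h1 : Tendsto (fun h : ℝ => h ^ 2 + y ^ 2) atTop atTop :=
    tendsto_atTop_add_const_right _ _ (tendsto_pow_atTop (by norm_num))
  simpa using h1.inv_tendsto_atTop.neg

lemma c_nonneg {y : ℝ} {h : ℝ} (hh : 0 ≤ h) : 0 ≤ c y h := by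
  unfold c; positivity

lemma c_cont (y : ℝ) (hy : 0 < y) : Continuous (c y) := by
  apply Continuous.div (by continuity) (by continuity)
  intro x; positivity

lemma integrableOn_c {y : ℝ} (hy : 0 < y) {s : ℝ} (hs : 0 ≤ s) :
    IntegrableOn (c y) (Ioi s) :=
  integrableOn_Ioi_deriv_of_nonneg' (fun x _ => hasDerivAt_neg_inv hy x)
    (fun x hx => c_nonneg (le_trans hs (le_of_lt hx))) (tendsto_neg_inv hy)

lemma integral_c {y : ℝ} (hy : 0 < y) {s : ℝ} (hs : 0 ≤ s) :
    ∫ h in Ioi s, c y h = (s ^ 2 + y ^ 2)⁻¹ := by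
  rw [integral_Ioi_of_hasDerivAt_of_nonneg' (fun x _ => hasDerivAt_neg_inv hy x)
    (fun x hx => c_nonneg (le_trans hs (le_of_lt hx))) (tendsto_neg_inv hy)]
  ring

lemma hasDerivAt_Phi {y : ℝ} (hy : 0 < y) (h : ℝ) :
    HasDerivAt (Phi y) (phi y h) h := by
  have hne : h ^ 2 + y ^ 2 ≠ 0 := by positivity
  have hy' : y ≠ 0 := ne_of_gt hy
  have h1 : HasDerivAt (fun h : ℝ => h / y) (1 / y) h := by
    simpa using (hasDerivAt_id h).div_const y
  have h2 : HasDerivAt (fun h : ℝ => Real.arctan (h / y))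
      (1 / (1 + (h / y) ^ 2) * (1 / y)) h := by exact (Real.hasDerivAt_arctan (h / y)).comp h h1
  have h3 : HasDerivAt (fun h : ℝ => h * y) y h := by
    simpa using (hasDerivAt_id h).mul_const y
  have h4 : HasDerivAt (fun h : ℝ => h ^ 2 + y ^ 2) (2 * h) h := by
    simpa using (hasDerivAt_pow 2 h).add_const (y ^ 2)
  have h5 : HasDerivAt (fun h : ℝ => h * y / (h ^ 2 + y ^ 2))
      ((y * (h ^ 2 + y ^ 2) - h * y * (2 * h)) / (h ^ 2 + y ^ 2) ^ 2) h := h3.div h4 hne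
  have h6 : HasDerivAt (Phi y) _ h :=
    (h2.sub h5).const_mul (2 / Real.pi)
  convert h6 using 1
  unfold phi c
  have h7 : 1 + (h / y) ^ 2 ≠ 0 := by positivity
  field_simp
  ring

lemma phi_nonneg {y h : ℝ} (hy : 0 ≤ y) (hh : 0 ≤ h) : 0 ≤ phi y h := by
  have := Real.pi_pos
  unfold phi c
  positivity

lemma phi_cont {y : ℝ} (hy : 0 < y) : Continuous (phi y) :=
  (continuous_const.mul (c_cont y hy)).mul (by continuity)

lemma tendsto_Phi_atTop {y : ℝ} (hy : 0 < y) : Tendsto (Phi y) atTop (𝓝 1) := by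
  have ha : Tendsto (fun h : ℝ => Real.arctan (h / y)) atTop (𝓝 (Real.pi / 2)) := by
    refine (Real.tendsto_arctan_atTop.mono_right nhdsWithin_le_nhds).comp ?_
    exact tendsto_id.atTop_div_const hy
  have hb : Tendsto (fun h : ℝ => h * y / (h ^ 2 + y ^ 2)) atTop (𝓝 0) := by
    have h0 : Tendsto (fun h : ℝ => y * h⁻¹) atTop (𝓝 0) := by
      simpa using tendsto_inv_atTop_zero.const_mul y
    refine squeeze_zero' ?_ ?_ h0
    · filter_upwards [eventually_gt_atTop 0] with h hh
      positivity
    · filter_upwards [eventually_gt_atTop 0] with h hh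
      rw [div_le_iff₀ (by positivity)]
      have he : y * h⁻¹ * (h ^ 2 + y ^ 2) = h * y + y ^ 3 / h := by field_simp
      rw [he]
      have : 0 ≤ y ^ 3 / h := by positivity
      linarith
  have hc := (ha.sub hb).const_mul (2 / Real.pi)
  have hpi := Real.pi_ne_zero
  have he : (2 / Real.pi) * (Real.pi / 2 - 0) = 1 := by field_simp; ring
  rw [he] at hc
  exact hc

lemma integrableOn_phi {y : ℝ} (hy : 0 < y) {a : ℝ} (ha : 0 ≤ a) :
    IntegrableOn (phi y) (Ioi a) :=
  integrableOn_Ioi_deriv_of_nonneg' (fun x _ => hasDerivAt_Phi hy x)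
    (fun x hx => phi_nonneg hy.le (le_trans ha hx.le)) (tendsto_Phi_atTop hy)

lemma integral_phi {y : ℝ} (hy : 0 < y) {a : ℝ} (ha : 0 ≤ a) :
    ∫ h in Ioi a, phi y h = 1 - Phi y a :=
  integral_Ioi_of_hasDerivAt_of_nonneg' (fun x _ => hasDerivAt_Phi hy x)
    (fun x hx => phi_nonneg hy.le (le_trans ha hx.le)) (tendsto_Phi_atTop hy)

lemma Phi_zero {y : ℝ} (hy : 0 < y) : Phi y 0 = 0 := by
  unfold Phi
  simp

/-- The Fubini computation for a single finite measure. -/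
lemma key (μ : Measure ℝ) [IsFiniteMeasure μ] (x₀ : ℝ) {y : ℝ} (hy : 0 < y) :
    ∫ t, ((x₀ - t) ^ 2 + y ^ 2)⁻¹ ∂μ
      = ∫ h in Ioi 0, c y h * (μ (Ioo (x₀ - h) (x₀ + h))).toReal := by
  have hcont : Continuous (c y) := c_cont y hy
  have step1 : ∀ t : ℝ, ((x₀ - t) ^ 2 + y ^ 2)⁻¹
      = ∫ h in Ioi 0, (Ioi |x₀ - t|).indicator (c y) h := by
    intro t
    rw [setIntegral_indicator measurableSet_Ioi, Ioi_inter_Ioi,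
      max_eq_right (abs_nonneg _), integral_c hy (abs_nonneg _), sq_abs]
  have hmeq : (fun p : ℝ × ℝ => (Ioi |x₀ - p.1|).indicator (c y) p.2)
      = Set.indicator {p : ℝ × ℝ | |x₀ - p.1| < p.2} (fun p => c y p.2) := by
    funext p
    simp only [Set.indicator_apply, mem_Ioi, mem_setOf_eq]
  have hSopen : IsOpen {p : ℝ × ℝ | |x₀ - p.1| < p.2} :=
    isOpen_lt (by continuity) continuous_snd
  have hmeas : AEStronglyMeasurable (fun p : ℝ × ℝ => (Ioi |x₀ - p.1|).indicator (c y) p.2)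
      (μ.prod (volume.restrict (Ioi 0))) := by
    rw [hmeq]
    exact (((hcont.comp continuous_snd).measurable).indicator
      hSopen.measurableSet).aestronglyMeasurable
  have hslice : ∀ t : ℝ, Integrable (fun h => (Ioi |x₀ - t|).indicator (c y) h)
      (volume.restrict (Ioi 0)) := by
    intro t
    rw [integrable_indicator_iff measurableSet_Ioi]
    have : IntegrableOn (c y) (Ioi |x₀ - t|) (volume.restrict (Ioi 0)) := by
      rw [IntegrableOn, Measure.restrict_restrict measurableSet_Ioi, Ioi_inter_Ioi,
        max_eq_left (abs_nonneg _)]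
      exact integrableOn_c hy (abs_nonneg _)
    exact this
  have hnorm : ∀ t : ℝ, (∫ h in Ioi 0, ‖(Ioi |x₀ - t|).indicator (c y) h‖)
      = ((x₀ - t) ^ 2 + y ^ 2)⁻¹ := by
    intro t
    rw [step1 t]
    apply integral_congr_ae
    filter_upwards [self_mem_ae_restrict measurableSet_Ioi] with h hh
    rw [Real.norm_eq_abs, abs_of_nonneg]
    apply Set.indicator_nonneg
    intro x hx
    exact c_nonneg (le_trans (abs_nonneg _) (le_of_lt hx))
  have hintnorm : Integrable (fun t => ((x₀ - t) ^ 2 + y ^ 2)⁻¹) μ := by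
    refine (integrable_const ((y ^ 2)⁻¹)).mono' ?_ ?_
    · apply Continuous.aestronglyMeasurable
      apply Continuous.inv₀ (by continuity)
      intro x; positivity
    · refine ae_of_all _ fun t => ?_
      rw [Real.norm_eq_abs, abs_of_nonneg (by positivity)]
      exact inv_anti₀ (by positivity) (le_add_of_nonneg_left (by positivity))
  have hprod : Integrable (fun p : ℝ × ℝ => (Ioi |x₀ - p.1|).indicator (c y) p.2)
      (μ.prod (volume.restrict (Ioi 0))) := by
    rw [integrable_prod_iff hmeas]
    exact ⟨ae_of_all _ hslice,
      Integrable.congr hintnorm (ae_of_all _ fun t => (hnorm t).symm)⟩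
  calc ∫ t, ((x₀ - t) ^ 2 + y ^ 2)⁻¹ ∂μ
      = ∫ t, (∫ h in Ioi 0, (Ioi |x₀ - t|).indicator (c y) h) ∂μ :=
        integral_congr_ae (ae_of_all _ step1)
    _ = ∫ h in Ioi 0, ∫ t, (Ioi |x₀ - t|).indicator (c y) h ∂μ := by
        exact integral_integral_swap (f := fun t h => (Ioi |x₀ - t|).indicator (c y) h) hprod
    _ = ∫ h in Ioi 0, c y h * (μ (Ioo (x₀ - h) (x₀ + h))).toReal := by
        refine integral_congr_ae (ae_of_all _ fun h => ?_)
        dsimp only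
        have hind : (fun t => (Ioi |x₀ - t|).indicator (c y) h)
            = (Ioo (x₀ - h) (x₀ + h)).indicator (fun _ => c y h) := by
          funext t
          simp only [Set.indicator_apply, mem_Ioi, mem_Ioo, abs_lt]
          congr 1
          simp only [eq_iff_iff]
          constructor
          · rintro ⟨h1, h2⟩; constructor <;> linarith
          · rintro ⟨h1, h2⟩; constructor <;> linarith
        rw [hind, integral_indicator_const _ measurableSet_Ioo, smul_eq_mul, mul_comm]
        rfl

/-- For a finite measure, the set of atoms is countable. -/
lemma countable_atoms (μ : Measure ℝ) [IsFiniteMeasure μ] :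
    Set.Countable {x : ℝ | μ {x} ≠ 0} := by
  have h := MeasureTheory.Measure.countable_meas_pos_of_disjoint_of_meas_iUnion_ne_top
    (μ := μ) (As := fun x : ℝ => {x}) (fun x => measurableSet_singleton x)
    (fun i j hij => by simpa [Function.onFun] using hij) (by
      exact ne_of_lt (lt_of_le_of_lt (measure_mono (subset_univ _)) (measure_lt_top μ univ)))
  convert h using 1
  ext x
  simp [pos_iff_ne_zero]

end FatouAux

open FatouAux

/-- Fatou's theorem: Let `F` be a function of bounded variation on `ℝ`,
realized as a distribution function of the signed measure `μ₁ - μ₂` (with `μ₁, μ₂` finite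
Borel measures).  If the symmetric derivative of `F` at `x₀` exists and equals `L`, then the
Poisson integral `𝒫_F(x₀, y) = (y/π) ∫ dF(t) / ((x₀ - t)² + y²)` tends to `L` as `y → 0⁺`. -/
theorem fatou_symmetric_derivative
    (μ₁ μ₂ : Measure ℝ) [IsFiniteMeasure μ₁] [IsFiniteMeasure μ₂]
    (F : ℝ → ℝ)
    (hF : ∀ a b : ℝ, a ≤ b →
      F b - F a = (μ₁ (Set.Ioc a b)).toReal - (μ₂ (Set.Ioc a b)).toReal)
    (x₀ L : ℝ)
    (hsym : Tendsto (fun h : ℝ => (F (x₀ + h) - F (x₀ - h)) / (2 * h))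
      (𝓝[>] 0) (𝓝 L)) :
    Tendsto (fun y : ℝ =>
        y / Real.pi *
          ((∫ t, 1 / ((x₀ - t) ^ 2 + y ^ 2) ∂μ₁) - ∫ t, 1 / ((x₀ - t) ^ 2 + y ^ 2) ∂μ₂))
      (𝓝[>] 0) (𝓝 L) := by
  have hpi := Real.pi_pos
  set M : ℝ := (μ₁ univ).toReal + (μ₂ univ).toReal with hMdef
  have hM0 : (0:ℝ) ≤ M := by positivity
  set g : ℝ → ℝ := fun h => if h ≤ 0 then L else
    ((μ₁ (Set.Ioc (x₀ - h) (x₀ + h))).toReal - (μ₂ (Set.Ioc (x₀ - h) (x₀ + h))).toReal) / (2 * h)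
    with hgdef
  -- g equals the F-quotient for positive h
  have hgF : ∀ h : ℝ, 0 < h → g h = (F (x₀ + h) - F (x₀ - h)) / (2 * h) := by
    intro h hh
    rw [hgdef]
    simp only [not_le.2 hh, if_false]
    rw [hF (x₀ - h) (x₀ + h) (by linarith)]
  have hgL : Tendsto g (𝓝[>] 0) (𝓝 L) := by
    refine hsym.congr' ?_
    filter_upwards [self_mem_nhdsWithin] with h hh
    exact (hgF h hh).symm
  -- measurability of g
  have hm1 : Measurable (fun h : ℝ => (μ₁ (Set.Ioc (x₀ - h) (x₀ + h))).toReal) := by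
    apply Monotone.measurable
    intro a b hab
    exact ENNReal.toReal_mono (measure_ne_top _ _)
      (measure_mono (Set.Ioc_subset_Ioc (by linarith) (by linarith)))
  have hm2 : Measurable (fun h : ℝ => (μ₂ (Set.Ioc (x₀ - h) (x₀ + h))).toReal) := by
    apply Monotone.measurable
    intro a b hab
    exact ENNReal.toReal_mono (measure_ne_top _ _)
      (measure_mono (Set.Ioc_subset_Ioc (by linarith) (by linarith)))
  have hgmeas : Measurable g := by
    rw [hgdef]
    exact Measurable.ite (measurableSet_le measurable_id measurable_const) measurable_const
      ((hm1.sub hm2).div (measurable_const.mul measurable_id))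
  -- bound on g
  have hgbd : ∀ h : ℝ, 0 < h → |g h| ≤ M / (2 * h) := by
    intro h hh
    rw [hgdef]
    simp only [not_le.2 hh, if_false]
    rw [abs_div, abs_of_pos (by linarith : (0:ℝ) < 2 * h)]
    gcongr
    have hA1 : (μ₁ (Set.Ioc (x₀ - h) (x₀ + h))).toReal ≤ (μ₁ univ).toReal :=
      ENNReal.toReal_mono (measure_ne_top _ _) (measure_mono (subset_univ _))
    have hA2 : (μ₂ (Set.Ioc (x₀ - h) (x₀ + h))).toReal ≤ (μ₂ univ).toReal :=
      ENNReal.toReal_mono (measure_ne_top _ _) (measure_mono (subset_univ _))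
    have hB1 : (0:ℝ) ≤ (μ₁ (Set.Ioc (x₀ - h) (x₀ + h))).toReal := ENNReal.toReal_nonneg
    have hB2 : (0:ℝ) ≤ (μ₂ (Set.Ioc (x₀ - h) (x₀ + h))).toReal := ENNReal.toReal_nonneg
    rw [abs_le, hMdef]
    exact ⟨by linarith, by linarith⟩
  -- the key pointwise bound for `phi * g`
  have hkey : ∀ y : ℝ, 0 < y → ∀ h : ℝ, 0 < h →
      ‖phi y h * g h‖ ≤ y / Real.pi * M * c y h := by
    intro y hy h hh
    have h2h : (2:ℝ) * h ≠ 0 := by positivity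
    rw [norm_mul, Real.norm_eq_abs, Real.norm_eq_abs,
      abs_of_nonneg (phi_nonneg hy.le hh.le)]
    calc phi y h * |g h| ≤ phi y h * (M / (2 * h)) :=
          mul_le_mul_of_nonneg_left (hgbd h hh) (phi_nonneg hy.le hh.le)
      _ = y / Real.pi * M * c y h := by
          unfold FatouAux.phi
          field_simp
  -- integrability of `phi y * g` on `Ioi 0`
  have hφg : ∀ y : ℝ, 0 < y → IntegrableOn (fun h => phi y h * g h) (Ioi 0) := by
    intro y hy
    refine ((integrableOn_c hy le_rfl).const_mul (y / Real.pi * M)).mono' ?_ ?_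
    · exact ((phi_cont hy).measurable.mul hgmeas).aestronglyMeasurable
    · filter_upwards [self_mem_ae_restrict measurableSet_Ioi] with h hh
      exact hkey y hy h hh
  -- integrability of `c y * m i`
  have hmIoo : ∀ (μ : Measure ℝ), IsFiniteMeasure μ → Measurable
      (fun h : ℝ => (μ (Ioo (x₀ - h) (x₀ + h))).toReal) := by
    intro μ hμ
    apply Monotone.measurable
    intro a b hab
    exact ENNReal.toReal_mono (measure_ne_top _ _)
      (measure_mono (Set.Ioo_subset_Ioo (by linarith) (by linarith)))
  have hcm : ∀ (μ : Measure ℝ) (_ : IsFiniteMeasure μ), ∀ y : ℝ, 0 < y →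
      IntegrableOn (fun h => c y h * (μ (Ioo (x₀ - h) (x₀ + h))).toReal) (Ioi 0) := by
    intro μ hμ y hy
    refine ((integrableOn_c hy le_rfl).const_mul ((μ univ).toReal)).mono' ?_ ?_
    · exact ((c_cont y hy).measurable.mul (hmIoo μ hμ)).aestronglyMeasurable
    · filter_upwards [self_mem_ae_restrict measurableSet_Ioi] with h hh
      have hc := c_nonneg (y := y) (le_of_lt hh)
      rw [Real.norm_eq_abs, abs_of_nonneg (mul_nonneg hc ENNReal.toReal_nonneg), mul_comm]
      exact mul_le_mul_of_nonneg_right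
        (ENNReal.toReal_mono (measure_ne_top _ _) (measure_mono (subset_univ _))) hc
  -- atoms
  have hE : Set.Countable {h : ℝ | μ₁ {x₀ + h} ≠ 0 ∨ μ₂ {x₀ + h} ≠ 0} := by
    have h1 : {h : ℝ | μ₁ {x₀ + h} ≠ 0 ∨ μ₂ {x₀ + h} ≠ 0}
        = (fun h : ℝ => x₀ + h) ⁻¹' ({x | μ₁ {x} ≠ 0} ∪ {x | μ₂ {x} ≠ 0}) := by
      ext h; simp [Set.mem_preimage]
    rw [h1]
    exact ((countable_atoms μ₁).union (countable_atoms μ₂)).preimage (add_right_injective x₀)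
  have hEae : ∀ᵐ h : ℝ, μ₁ {x₀ + h} = 0 ∧ μ₂ {x₀ + h} = 0 := by
    rw [ae_iff]
    refine measure_mono_null ?_ (hE.measure_zero volume)
    intro a ha
    simp only [mem_setOf_eq] at *
    tauto
  -- a.e. identity linking the two sides
  have hae : ∀ y : ℝ, 0 < y → ∀ᵐ h ∂(volume.restrict (Ioi 0)),
      y / Real.pi * (c y h * (μ₁ (Ioo (x₀ - h) (x₀ + h))).toReal
        - c y h * (μ₂ (Ioo (x₀ - h) (x₀ + h))).toReal) = phi y h * g h := by
    intro y hy
    filter_upwards [ae_restrict_of_ae hEae, self_mem_ae_restrict measurableSet_Ioi]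
      with h hAtom hh
    obtain ⟨hA1, hA2⟩ := hAtom
    have hlt : x₀ - h < x₀ + h := by simp only [mem_Ioi] at hh; linarith
    have hset : Set.Ioc (x₀ - h) (x₀ + h) = Ioo (x₀ - h) (x₀ + h) ∪ {x₀ + h} := by
      ext z
      simp only [mem_Ioc, mem_Ioo, Set.union_singleton, Set.mem_insert_iff]
      constructor
      · rintro ⟨h1, h2⟩
        rcases h2.lt_or_eq with h3 | h3
        · exact Or.inr ⟨h1, h3⟩
        · exact Or.inl h3
      · rintro (h3 | ⟨h1, h2⟩)
        · exact ⟨by linarith, by linarith⟩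
        · exact ⟨h1, h2.le⟩
    have hmeq : ∀ (μ : Measure ℝ), μ {x₀ + h} = 0 →
        μ (Set.Ioc (x₀ - h) (x₀ + h)) = μ (Ioo (x₀ - h) (x₀ + h)) := by
      intro μ hμ
      rw [hset]
      refine le_antisymm ((measure_union_le _ _).trans ?_) (measure_mono subset_union_left)
      simp [hμ]
    simp only [mem_Ioi] at hh
    rw [hgdef]
    simp only [not_le.2 hh, if_false]
    rw [hmeq μ₁ hA1, hmeq μ₂ hA2]
    unfold FatouAux.phi
    have h2h : (2:ℝ) * h ≠ 0 := by positivity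
    field_simp
  -- the eventual identity for the Poisson integral
  have hEq : ∀ᶠ y in 𝓝[>] (0:ℝ),
      y / Real.pi *
        ((∫ t, 1 / ((x₀ - t) ^ 2 + y ^ 2) ∂μ₁) - ∫ t, 1 / ((x₀ - t) ^ 2 + y ^ 2) ∂μ₂)
      = (∫ h in Ioc (0:ℝ) 1, phi y h * g h) + ∫ h in Ioi (1:ℝ), phi y h * g h := by
    filter_upwards [self_mem_nhdsWithin] with y hy
    simp only [mem_Ioi] at hy
    simp only [one_div]
    rw [key μ₁ x₀ hy, key μ₂ x₀ hy,
      ← integral_sub (hcm μ₁ inferInstance y hy) (hcm μ₂ inferInstance y hy),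
      ← integral_const_mul]
    rw [integral_congr_ae (hae y hy)]
    rw [← setIntegral_union (Set.Ioc_disjoint_Ioi le_rfl) measurableSet_Ioi
      ((hφg y hy).mono_set Set.Ioc_subset_Ioi_self)
      ((hφg y hy).mono_set (Set.Ioi_subset_Ioi zero_le_one)),
      Ioc_union_Ioi_eq_Ioi zero_le_one]
  -- integral of phi over Ioc 0 1
  have hIoc : ∀ y : ℝ, 0 < y → ∫ h in Ioc (0:ℝ) 1, phi y h = Phi y 1 := by
    intro y hy
    have hsplit : ∫ h in Ioi (0:ℝ), phi y h
        = (∫ h in Ioc (0:ℝ) 1, phi y h) + ∫ h in Ioi (1:ℝ), phi y h := by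
      rw [← setIntegral_union (Set.Ioc_disjoint_Ioi le_rfl) measurableSet_Ioi
        ((integrableOn_phi hy le_rfl).mono_set Set.Ioc_subset_Ioi_self)
        ((integrableOn_phi hy le_rfl).mono_set (Set.Ioi_subset_Ioi zero_le_one)),
        Ioc_union_Ioi_eq_Ioi zero_le_one]
    rw [integral_phi hy le_rfl, integral_phi hy zero_le_one, Phi_zero hy] at hsplit
    linarith
  have hPhi1 : Tendsto (fun y : ℝ => Phi y 1) (𝓝[>] (0:ℝ)) (𝓝 1) := by
    have ha : Tendsto (fun y : ℝ => Real.arctan (1 / y)) (𝓝[>] (0:ℝ)) (𝓝 (Real.pi / 2)) := by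
      refine (tendsto_nhds_of_tendsto_nhdsWithin Real.tendsto_arctan_atTop).comp ?_
      exact (tendsto_inv_nhdsGT_zero (𝕜 := ℝ)).congr fun y => (one_div y).symm
    have hb : Tendsto (fun y : ℝ => 1 * y / ((1:ℝ) ^ 2 + y ^ 2)) (𝓝[>] (0:ℝ)) (𝓝 0) := by
      apply Tendsto.mono_left ?_ nhdsWithin_le_nhds
      have hcnt : ContinuousAt (fun y : ℝ => 1 * y / ((1:ℝ) ^ 2 + y ^ 2)) 0 := by
        apply ContinuousAt.div (by fun_prop) (by fun_prop) (by norm_num)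
      have h0 := hcnt.tendsto
      norm_num at h0
      convert h0 using 2
      norm_num
    have hc := (ha.sub hb).const_mul (2 / Real.pi)
    have he : (2 / Real.pi) * (Real.pi / 2 - 0) = 1 := by
      have := Real.pi_ne_zero; field_simp; ring
    rw [he] at hc
    refine hc.congr fun y => ?_
    unfold FatouAux.Phi
    norm_num
  have hiφ : Tendsto (fun y : ℝ => ∫ x in Icc (0:ℝ) 1, phi y x) (𝓝[>] (0:ℝ)) (𝓝 1) := by
    refine Tendsto.congr' ?_ hPhi1
    filter_upwards [self_mem_nhdsWithin] with y hy
    rw [integral_Icc_eq_integral_Ioc, hIoc y hy]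
  have hnφ : ∀ᶠ y in 𝓝[>] (0:ℝ), ∀ x ∈ Icc (0:ℝ) 1, 0 ≤ phi y x := by
    filter_upwards [self_mem_nhdsWithin] with y hy x hx
    exact phi_nonneg (le_of_lt hy) hx.1
  have hlφ : ∀ u : Set ℝ, IsOpen u → (0:ℝ) ∈ u →
      TendstoUniformlyOn phi 0 (𝓝[>] (0:ℝ)) (Icc 0 1 \ u) := by
    intro u hu h0u
    rcases Metric.isOpen_iff.1 hu 0 h0u with ⟨δ, hδ, hball⟩
    rw [Metric.tendstoUniformlyOn_iff]
    intro ε hε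
    have hT : Tendsto (fun y : ℝ => 4 * y / (Real.pi * δ ^ 2)) (𝓝[>] (0:ℝ)) (𝓝 0) := by
      apply Tendsto.mono_left ?_ nhdsWithin_le_nhds
      have hcnt : ContinuousAt (fun y : ℝ => 4 * y / (Real.pi * δ ^ 2)) 0 :=
        (continuousAt_const.mul continuousAt_id).div_const _
      have h0 := hcnt.tendsto
      norm_num at h0
      exact h0
    filter_upwards [(tendsto_order.1 hT).2 ε hε, self_mem_nhdsWithin] with y hyε hy x hx
    have hy' : (0:ℝ) < y := hy
    obtain ⟨⟨hx0, hx1⟩, hxu⟩ := hx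
    have hxδ : δ ≤ x := by
      by_contra hcon
      push_neg at hcon
      refine hxu (hball ?_)
      rw [Metric.mem_ball, Real.dist_eq, sub_zero, abs_of_nonneg hx0]
      exact hcon
    have hxpos : (0:ℝ) < x := lt_of_lt_of_le hδ hxδ
    have h1 : phi y x = 4 * y * x ^ 2 / (Real.pi * (x ^ 2 + y ^ 2) ^ 2) := by
      unfold FatouAux.phi FatouAux.c
      field_simp
      ring
    have hsq : x ^ 2 * δ ^ 2 ≤ (x ^ 2 + y ^ 2) ^ 2 := by
      have hd2 : δ ^ 2 ≤ x ^ 2 := by nlinarith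
      have ht1 : x ^ 2 * δ ^ 2 ≤ x ^ 2 * x ^ 2 := by nlinarith [sq_nonneg x]
      have ht2 : x ^ 2 * x ^ 2 ≤ (x ^ 2 + y ^ 2) ^ 2 := by nlinarith [sq_nonneg (x * y), sq_nonneg (y * y)]
      linarith
    have h2 : phi y x ≤ 4 * y / (Real.pi * δ ^ 2) := by
      rw [h1, div_le_div_iff₀ (by positivity) (by positivity)]
      nlinarith [mul_le_mul_of_nonneg_left hsq (by positivity : (0:ℝ) ≤ 4 * y * Real.pi)]
    rw [Pi.zero_apply, dist_comm, Real.dist_eq, sub_zero,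
      abs_of_nonneg (phi_nonneg hy'.le hx0)]
    exact lt_of_le_of_lt h2 hyε
  have hmg : IntegrableOn g (Icc (0:ℝ) 1) := by
    have h1 := Metric.tendsto_nhds.1 hgL 1 one_pos
    rw [eventually_nhdsWithin_iff, Metric.eventually_nhds_iff] at h1
    obtain ⟨δ, hδ, hδ'⟩ := h1
    set C : ℝ := |L| + 1 + M / (2 * δ) with hC
    have hMδ : (0:ℝ) ≤ M / (2 * δ) := by positivity
    refine Integrable.mono' (g := fun _ => C) ?_ hgmeas.aestronglyMeasurable ?_
    · exact integrableOn_const (ne_of_lt measure_Icc_lt_top)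
    · filter_upwards [self_mem_ae_restrict measurableSet_Icc] with h hh
      obtain ⟨hh0, hh1⟩ := hh
      rw [Real.norm_eq_abs]
      rcases eq_or_lt_of_le hh0 with h0 | h0
      · have : g h = L := by rw [hgdef]; simp [← h0]
        rw [this, hC]; linarith [abs_nonneg L]
      · by_cases hhδ : h < δ
        · have hd := hδ' (by rw [Real.dist_eq, sub_zero, abs_of_pos h0]; exact hhδ)
            (mem_Ioi.2 h0)
          rw [Real.dist_eq] at hd
          have := abs_sub_abs_le_abs_sub (g h) L
          rw [hC]; linarith
        · push_neg at hhδ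
          have hb1 : |g h| ≤ M / (2 * h) := hgbd h h0
          have hb2 : M / (2 * h) ≤ M / (2 * δ) := by gcongr
          rw [hC]; linarith [abs_nonneg L]
  have hcg : Tendsto g (𝓝[Icc (0:ℝ) 1] 0) (𝓝 L) := by
    have hset : Icc (0:ℝ) 1 = insert 0 (Ioc 0 1) := (Set.Ioc_insert_left zero_le_one).symm
    rw [hset, nhdsWithin_insert, tendsto_sup]
    constructor
    · have hg0 : g 0 = L := by rw [hgdef]; simp
      rw [← hg0]
      exact tendsto_pure_nhds g 0
    · exact hgL.mono_left (nhdsWithin_mono 0 Set.Ioc_subset_Ioi_self)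
  have peak := tendsto_setIntegral_peak_smul_of_integrableOn_of_tendsto
    (μ := volume) (s := Icc (0:ℝ) 1) (t := Icc (0:ℝ) 1) (x₀ := (0:ℝ)) (l := 𝓝[>] (0:ℝ))
    (φ := phi) (g := g) (a := L) measurableSet_Icc measurableSet_Icc subset_rfl
    self_mem_nhdsWithin (ne_of_lt measure_Icc_lt_top) hnφ hlφ hiφ
    (by filter_upwards [self_mem_nhdsWithin] with y hy
        exact ((phi_cont hy).aestronglyMeasurable).restrict) hmg hcg
  have part1 : Tendsto (fun y : ℝ => ∫ h in Ioc (0:ℝ) 1, phi y h * g h)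
      (𝓝[>] (0:ℝ)) (𝓝 L) := by
    refine peak.congr fun y => ?_
    rw [integral_Icc_eq_integral_Ioc]
    simp only [smul_eq_mul]
  have part2 : Tendsto (fun y : ℝ => ∫ h in Ioi (1:ℝ), phi y h * g h)
      (𝓝[>] (0:ℝ)) (𝓝 0) := by
    apply squeeze_zero_norm' (a := fun y : ℝ => y / Real.pi * M * ((1:ℝ) ^ 2 + y ^ 2)⁻¹)
    · filter_upwards [self_mem_nhdsWithin] with y hy
      have hy' : (0:ℝ) < y := hy
      have hb := norm_integral_le_of_norm_le (f := fun h => phi y h * g h)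
        (μ := volume.restrict (Ioi 1))
        ((integrableOn_c hy' zero_le_one).const_mul (y / Real.pi * M)) ?_
      · rw [integral_const_mul, integral_c hy' zero_le_one] at hb
        exact hb
      · filter_upwards [self_mem_ae_restrict measurableSet_Ioi] with h hh
        exact hkey y hy' h (lt_trans zero_lt_one hh)
    · apply Tendsto.mono_left ?_ nhdsWithin_le_nhds
      have hcnt : ContinuousAt (fun y : ℝ => y / Real.pi * M * ((1:ℝ) ^ 2 + y ^ 2)⁻¹) 0 := by
        apply ContinuousAt.mul (by fun_prop)
        exact ContinuousAt.inv₀ (by fun_prop) (by norm_num)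
      have h0 := hcnt.tendsto
      norm_num at h0
      convert h0 using 2
      norm_num
  have hsum := part1.add part2
  rw [add_zero] at hsum
  exact Tendsto.congr' (hEq.mono fun y hy => hy.symm) hsum
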